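/- Let u ∈ ℝⁿ with ‖u‖₂ = 1 and let p ∈ (0,1). For every measurable h : ℝⁿ → [0,1] satisfying E_{s ~ N(0,I_n)}[h(s)] = p, one has E_{s ~ N(0,I_n)}[h(s) · uᵀs] ≤ (1/√(2π)) · exp(−(Φ⁻¹(p))²/2). Moreover, equality is attained by the indicator function h*(s) = 1{uᵀs ≥ −Φ⁻¹(p)}, which satisfies the constraint E_{s ~ N(0,I_n)}[h*(s)] = p. -/

import Mathlib

open MeasureTheory Matrix

/-- Density of the standard Gaussian `N(0, I_n)` on ℝⁿ (w.r.t. Lebesgue measure). -/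
noncomputable def stdGaussDensity (n : ℕ) (s : Fin n → ℝ) : ℝ :=
  (Real.sqrt ((2 * Real.pi) ^ n))⁻¹ * Real.exp (-(∑ i, s i ^ 2) / 2)

/-- Standard Gaussian cumulative distribution function Φ on ℝ. -/
noncomputable def stdGaussianCDF (x : ℝ) : ℝ :=
  (ProbabilityTheory.gaussianReal 0 1 (Set.Iic x)).toReal


section Aux
open ProbabilityTheory Real

lemma g1_eq (x : ℝ) : gaussianPDFReal 0 1 x = (Real.sqrt (2 * Real.pi))⁻¹ * Real.exp (-x ^ 2 / 2) := by
  simp [gaussianPDFReal]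

lemma density_prod {n : ℕ} (s : Fin n → ℝ) :
    stdGaussDensity n s = ∏ i, gaussianPDFReal 0 1 (s i) := by
  simp only [g1_eq, stdGaussDensity]
  rw [Finset.prod_mul_distrib, Finset.prod_const, ← Real.exp_sum]
  congr 1
  · rw [show (2*Real.pi)^n = ((Real.sqrt (2*Real.pi))^2)^n by rw [Real.sq_sqrt (by positivity)],
      ← pow_mul, mul_comm 2 n, pow_mul, Real.sqrt_sq (by positivity)]
    simp [mul_pow, mul_inv, inv_pow, mul_comm]
  · rw [← Finset.sum_div, ← Finset.sum_neg_distrib]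

section Transfer

variable {n : ℕ} [NeZero n]

lemma transfer (u : Fin n → ℝ) (hu : Real.sqrt (∑ i, u i ^ 2) = 1) (f : ℝ → ℝ)
    (hf : Integrable (fun x => f x * gaussianPDFReal 0 1 x)) :
    Integrable (fun s : Fin n → ℝ => f (u ⬝ᵥ s) * stdGaussDensity n s) ∧
    (∫ s : Fin n → ℝ, f (u ⬝ᵥ s) * stdGaussDensity n s)
      = ∫ x, f x * gaussianPDFReal 0 1 x := by
  classical
  set uE : EuclideanSpace ℝ (Fin n) := (WithLp.equiv 2 (Fin n → ℝ)).symm u with huE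
  have huEi : ∀ i, uE i = u i := fun i => rfl
  have hunorm : ‖uE‖ = 1 := by
    rw [EuclideanSpace.norm_eq]
    simp only [huEi]
    simpa [sq_abs] using hu
  have horth : Orthonormal ℝ (({0} : Set (Fin n)).restrict (fun _ : Fin n => uE)) := by
    rw [orthonormal_iff_ite]
    intro i j
    have hi := i.2; have hj := j.2
    simp only [Set.mem_singleton_iff] at hi hj
    have hij : i = j := Subtype.coe_injective (hi.trans hj.symm)
    subst hij
    simp only [if_pos rfl, Set.restrict_apply]
    rw [real_inner_self_eq_norm_sq, show ({0} : Set (Fin n)).restrict (fun _ : Fin n => uE) i = uE from rfl, hunorm]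
    norm_num
  obtain ⟨b, hb⟩ := Orthonormal.exists_orthonormalBasis_extension_of_card_eq
    (𝕜 := ℝ) (by simp) horth
  have hb0 : b 0 = uE := hb 0 rfl
  -- the measure-preserving rotation
  set T : (Fin n → ℝ) ≃ᵐ (Fin n → ℝ) :=
    (MeasurableEquiv.toLp 2 (Fin n → ℝ)).trans
      ((b.repr.symm.toHomeomorph.toMeasurableEquiv).trans
        (MeasurableEquiv.toLp 2 (Fin n → ℝ)).symm) with hT
  have hmp : MeasurePreserving T volume volume :=
    (EuclideanSpace.volume_preserving_symm_measurableEquiv_toLp (ι := Fin n)).comp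
      ((b.measurePreserving_repr_symm).comp
        (EuclideanSpace.volume_preserving_symm_measurableEquiv_toLp (ι := Fin n)).symm)
  have hTs : ∀ s : Fin n → ℝ, ∀ i, T s i
      = b.repr.symm ((WithLp.equiv 2 (Fin n → ℝ)).symm s) i :=
    fun s i => rfl
  -- key pointwise facts
  have hval : ∀ s : Fin n → ℝ, u ⬝ᵥ (T s) = s 0 := by
    intro s
    have h1 : u ⬝ᵥ (T s)
        = (inner ℝ (b 0) (b.repr.symm ((WithLp.equiv 2 (Fin n → ℝ)).symm s)) : ℝ) := by
      rw [hb0]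
      simp only [PiLp.inner_apply, RCLike.inner_apply, conj_trivial, dotProduct]
      exact Finset.sum_congr rfl fun i _ => by rw [huEi, hTs, mul_comm]
    rw [h1, ← OrthonormalBasis.repr_apply_apply, LinearIsometryEquiv.apply_symm_apply]
    rfl
  have hnorm2 : ∀ s : Fin n → ℝ, ∑ i, (T s i) ^ 2 = ∑ i, (s i) ^ 2 := by
    intro s
    have h1 : ∀ x : EuclideanSpace ℝ (Fin n), (inner ℝ x x : ℝ) = ∑ i, (x i) ^ 2 := by
      intro x
      simp only [PiLp.inner_apply, RCLike.inner_apply, conj_trivial, sq]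
    have h2 := b.repr.symm.inner_map_map
      ((WithLp.equiv 2 (Fin n → ℝ)).symm s) ((WithLp.equiv 2 (Fin n → ℝ)).symm s)
    rw [h1, h1] at h2
    calc ∑ i, (T s i) ^ 2
        = ∑ i, (b.repr.symm ((WithLp.equiv 2 (Fin n → ℝ)).symm s) i) ^ 2 :=
          Finset.sum_congr rfl fun i _ => by rw [hTs]
      _ = ∑ i, (s i) ^ 2 := by rw [h2]; exact Finset.sum_congr rfl fun i _ => rfl
  set F : Fin n → ℝ → ℝ := fun i x => (if i = 0 then f x else 1) * gaussianPDFReal 0 1 x with hF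
  have hFint : ∀ i, Integrable (F i) := by
    intro i
    by_cases hi : i = 0
    · simpa [hF, hi] using hf
    · simpa [hF, hi] using integrable_gaussianPDFReal 0 1
  have hptwise : ∀ s : Fin n → ℝ, f (u ⬝ᵥ T s) * stdGaussDensity n (T s) = ∏ i, F i (s i) := by
    intro s
    rw [hval]
    have hd : stdGaussDensity n (T s) = stdGaussDensity n s := by
      simp only [stdGaussDensity]; rw [hnorm2]
    rw [hd, density_prod]
    simp only [hF]
    rw [Finset.prod_mul_distrib, Finset.prod_ite_eq' Finset.univ (0 : Fin n) (fun i => f (s i))]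
    simp
  constructor
  · rw [← hmp.integrable_comp_emb T.measurableEmbedding]
    have heq : ((fun s : Fin n → ℝ => f (u ⬝ᵥ s) * stdGaussDensity n s) ∘ T)
        = fun s => ∏ i, F i (s i) := funext fun s => hptwise s
    rw [heq]
    exact Integrable.fintype_prod hFint
  · rw [← MeasurePreserving.integral_comp' hmp]
    have h3 : ∀ i : Fin n, (∫ x, F i x) = if i = 0 then (∫ x, f x * gaussianPDFReal 0 1 x) else 1 := by
      intro i; by_cases hi : i = 0
      · simp [hF, hi]
      · simp only [hF, hi, if_false, one_mul]
        exact integral_gaussianPDFReal_eq_one 0 one_ne_zero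
    calc ∫ s, f (u ⬝ᵥ T s) * stdGaussDensity n (T s)
        = ∫ s : Fin n → ℝ, ∏ i, F i (s i) := by simp_rw [hptwise]
      _ = ∏ i, ∫ x, F i x := MeasureTheory.integral_fintype_prod_eq_prod F
      _ = ∫ x, f x * gaussianPDFReal 0 1 x := by
          rw [Finset.prod_congr rfl (fun i _ => h3 i),
            Finset.prod_ite_eq' Finset.univ (0 : Fin n)
              (fun _ => ∫ x, f x * gaussianPDFReal 0 1 x)]
          simp

end Transfer

lemma g1_nonneg (x : ℝ) : 0 ≤ gaussianPDFReal 0 1 x := gaussianPDFReal_nonneg 0 1 x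

lemma ite_indicator_eq (a : ℝ) (f : ℝ → ℝ) :
    (fun x => ((if -a ≤ x then (1:ℝ) else 0) * f x) * gaussianPDFReal 0 1 x)
      = Set.indicator (Set.Ici (-a)) (fun x => f x * gaussianPDFReal 0 1 x) := by
  funext x; by_cases h : -a ≤ x <;> simp [Set.indicator_apply, h]

lemma int_x_g : Integrable (fun x : ℝ => x * gaussianPDFReal 0 1 x) := by
  have h1 : Integrable (fun x : ℝ => x * Real.exp (-(1/2) * x^2)) :=
    integrable_mul_exp_neg_mul_sq (by norm_num)
  have h2 := h1.const_mul ((Real.sqrt (2*Real.pi))⁻¹)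
  apply h2.congr
  filter_upwards with x
  rw [g1_eq]; ring_nf

lemma int_abs_g : Integrable (fun x : ℝ => |x| * gaussianPDFReal 0 1 x) := by
  apply int_x_g.abs.congr
  filter_upwards with x
  rw [abs_mul, abs_of_nonneg (g1_nonneg x)]

lemma ite_indicator_eq_one (a : ℝ) :
    (fun x => (if -a ≤ x then (1:ℝ) else 0) * gaussianPDFReal 0 1 x)
      = Set.indicator (Set.Ici (-a)) (gaussianPDFReal 0 1) := by
  funext x; by_cases h : -a ≤ x <;> simp [Set.indicator_apply, h]

lemma int_ite_g (a : ℝ) :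
    Integrable (fun x => (if -a ≤ x then (1:ℝ) else 0) * gaussianPDFReal 0 1 x) := by
  rw [ite_indicator_eq_one a]
  exact (integrable_gaussianPDFReal 0 1).indicator measurableSet_Ici

lemma int_ite_x_g (a : ℝ) :
    Integrable (fun x => ((if -a ≤ x then (1:ℝ) else 0) * x) * gaussianPDFReal 0 1 x) := by
  rw [ite_indicator_eq a (fun x => x)]
  exact int_x_g.indicator measurableSet_Ici

lemma integral_ite_g (a : ℝ) :
    ∫ x, (if -a ≤ x then (1:ℝ) else 0) * gaussianPDFReal 0 1 x = stdGaussianCDF a := by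
  have h1 : ∫ x, (if -a ≤ x then (1:ℝ) else 0) * gaussianPDFReal 0 1 x
      = ∫ x in Set.Ici (-a), gaussianPDFReal 0 1 x := by
    rw [← integral_indicator measurableSet_Ici, ite_indicator_eq_one a]
  have h2 : gaussianReal 0 1 (Set.Ici (-a))
      = ENNReal.ofReal (∫ x in Set.Ici (-a), gaussianPDFReal 0 1 x) :=
    gaussianReal_apply_eq_integral 0 one_ne_zero _
  have hmap : (gaussianReal 0 1).map (((-1 : ℝ)) * ·) = gaussianReal 0 1 := by
    have h := gaussianReal_map_const_mul (μ := 0) (v := 1) (-1 : ℝ)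
    have hv : (⟨(-1:ℝ)^2, sq_nonneg _⟩ : NNReal) * 1 = 1 := by
      ext; norm_num
    convert h using 2
    · simp
    · ext; simp
  have h3 : gaussianReal 0 1 (Set.Iic a) = gaussianReal 0 1 (Set.Ici (-a)) := by
    conv_lhs => rw [← hmap]
    rw [Measure.map_apply (by fun_prop : Measurable fun x : ℝ => (-1:ℝ) * x) measurableSet_Iic]
    congr 1
    ext x
    simp only [Set.mem_preimage, Set.mem_Iic, Set.mem_Ici, neg_one_mul]
    exact neg_le
  rw [h1, stdGaussianCDF, h3, h2, ENNReal.toReal_ofReal]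
  exact setIntegral_nonneg measurableSet_Ici fun x _ => g1_nonneg x

lemma integral_ite_x_g (a : ℝ) :
    ∫ x, ((if -a ≤ x then (1:ℝ) else 0) * x) * gaussianPDFReal 0 1 x
      = (Real.sqrt (2 * Real.pi))⁻¹ * Real.exp (-a ^ 2 / 2) := by
  rw [ite_indicator_eq a (fun x => x), integral_indicator measurableSet_Ici]
  have h2 : ∀ x : ℝ, x * gaussianPDFReal 0 1 x
      = (Real.sqrt (2*Real.pi))⁻¹ * (x * Real.exp (-x^2/2)) := fun x => by rw [g1_eq]; ring
  simp_rw [h2]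
  rw [integral_const_mul]
  have hintg : Integrable (fun x : ℝ => x * Real.exp (-x^2/2)) := by
    apply (integrable_mul_exp_neg_mul_sq (b := 1/2) (by norm_num)).congr
    filter_upwards with x
    ring_nf
  have h3 : ∫ x in Set.Ici (-a), x * Real.exp (-x^2/2) = Real.exp (-a^2/2) := by
    rw [integral_Ici_eq_integral_Ioi]
    have hder : ∀ x ∈ Set.Ioi (-a), HasDerivAt (fun y : ℝ => -Real.exp (-y^2/2))
        (x * Real.exp (-x^2/2)) x := by
      intro x _
      have hi : HasDerivAt (fun y : ℝ => -y^2/2) (-x) x := by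
        have h := ((hasDerivAt_pow 2 x).neg).div_const 2
        exact h.congr_deriv (by norm_num; ring)
      have := (hi.exp).neg
      exact this.congr_deriv (by ring)
    have hlim : Filter.Tendsto (fun y : ℝ => -Real.exp (-y^2/2)) Filter.atTop (nhds 0) := by
      have A : Filter.Tendsto (fun y : ℝ => y^2/2) Filter.atTop Filter.atTop :=
        (Filter.tendsto_pow_atTop two_ne_zero).atTop_div_const (by norm_num)
      have B : Filter.Tendsto (fun y : ℝ => -(y^2/2)) Filter.atTop Filter.atBot :=
        Filter.tendsto_neg_atTop_atBot.comp A
      have C := (Real.tendsto_exp_atBot.comp B).neg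
      simp only [neg_zero] at C
      apply C.congr
      intro y
      simp [Function.comp, neg_div]
    have hcont : ContinuousWithinAt (fun y : ℝ => -Real.exp (-y^2/2)) (Set.Ici (-a)) (-a) :=
      (((continuous_pow 2).neg.div_const 2).rexp.neg).continuousWithinAt
    have := integral_Ioi_of_hasDerivAt_of_tendsto hcont hder hintg.integrableOn hlim
    rw [this]
    simp [neg_sq]
  rw [h3]

lemma stdGaussDensity_nonneg {n : ℕ} (s : Fin n → ℝ) : 0 ≤ stdGaussDensity n s := by
  unfold stdGaussDensity; positivity

lemma measurable_stdGaussDensity (n : ℕ) : Measurable (stdGaussDensity n) := by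
  unfold stdGaussDensity; fun_prop

lemma measurable_dot {n : ℕ} (u : Fin n → ℝ) : Measurable (fun s : Fin n → ℝ => u ⬝ᵥ s) := by
  simp only [dotProduct]; fun_prop


end Aux

open ProbabilityTheory Real in
/-- among measurable `h : ℝⁿ → [0,1]` with `E[h(s)] = p` under the
standard Gaussian, `E[h(s)·uᵀs] ≤ (1/√(2π)) exp(−Φ⁻¹(p)²/2)` for unit `u`, and
equality is attained by the indicator `h*(s) = 1{uᵀs ≥ −Φ⁻¹(p)}`, which
satisfies the constraint. -/
theorem gaussian_indicator_maximizes_inner_expectation (n : ℕ)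
    (u : Fin n → ℝ) (hu : Real.sqrt (∑ i, u i ^ 2) = 1)
    (p : ℝ) (hp : p ∈ Set.Ioo (0:ℝ) 1)
    (Φinv : ℝ → ℝ)
    (hΦinv : ∀ q ∈ Set.Ioo (0:ℝ) 1, stdGaussianCDF (Φinv q) = q) :
    (∀ h : (Fin n → ℝ) → ℝ, Measurable h → (∀ v, h v ∈ Set.Icc (0:ℝ) 1) →
      (∫ s, h s * stdGaussDensity n s) = p →
      (∫ s, h s * (u ⬝ᵥ s) * stdGaussDensity n s) ≤
        (Real.sqrt (2 * Real.pi))⁻¹ * Real.exp (-(Φinv p) ^ 2 / 2)) ∧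
    (∫ s, (if -(Φinv p) ≤ u ⬝ᵥ s then (1:ℝ) else 0) * stdGaussDensity n s) = p ∧
    (∫ s, (if -(Φinv p) ≤ u ⬝ᵥ s then (1:ℝ) else 0) * (u ⬝ᵥ s) *
        stdGaussDensity n s) =
      (Real.sqrt (2 * Real.pi))⁻¹ * Real.exp (-(Φinv p) ^ 2 / 2) := by
  haveI : NeZero n := by
    constructor
    rintro rfl
    rw [Finset.univ_eq_empty, Finset.sum_empty, Real.sqrt_zero] at hu
    exact one_ne_zero hu.symm
  have hcdf : stdGaussianCDF (Φinv p) = p := hΦinv p hp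
  have tIte := transfer u hu (fun x => if -(Φinv p) ≤ x then (1:ℝ) else 0) (int_ite_g (Φinv p))
  have tIteX := transfer u hu (fun x => (if -(Φinv p) ≤ x then (1:ℝ) else 0) * x)
    (int_ite_x_g (Φinv p))
  have tAbs := transfer u hu (fun x => |x|) int_abs_g
  have tOne := transfer u hu (fun _ => (1:ℝ)) (by simpa using integrable_gaussianPDFReal 0 1)
  have part2 : (∫ s, (if -(Φinv p) ≤ u ⬝ᵥ s then (1:ℝ) else 0) * stdGaussDensity n s) = p := by
    have e2 : (∫ s, (if -(Φinv p) ≤ u ⬝ᵥ s then (1:ℝ) else 0) * stdGaussDensity n s)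
        = ∫ x, (if -(Φinv p) ≤ x then (1:ℝ) else 0) * gaussianPDFReal 0 1 x := tIte.2
    rw [e2, integral_ite_g (Φinv p), hcdf]
  have part3 : (∫ s, (if -(Φinv p) ≤ u ⬝ᵥ s then (1:ℝ) else 0) * (u ⬝ᵥ s) *
        stdGaussDensity n s)
      = (Real.sqrt (2 * Real.pi))⁻¹ * Real.exp (-(Φinv p) ^ 2 / 2) := by
    have e3 : (∫ s, (if -(Φinv p) ≤ u ⬝ᵥ s then (1:ℝ) else 0) * (u ⬝ᵥ s) * stdGaussDensity n s)
        = ∫ x, ((if -(Φinv p) ≤ x then (1:ℝ) else 0) * x) * gaussianPDFReal 0 1 x := tIteX.2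
    rw [e3, integral_ite_x_g (Φinv p)]
  refine ⟨?_, part2, part3⟩
  intro h hmeas hbdd hconstraint
  set a := Φinv p with ha
  have IH1 : Integrable (fun s : Fin n → ℝ =>
      (if -a ≤ u ⬝ᵥ s then (1:ℝ) else 0) * stdGaussDensity n s) := tIte.1
  have IH2 : Integrable (fun s : Fin n → ℝ =>
      (if -a ≤ u ⬝ᵥ s then (1:ℝ) else 0) * (u ⬝ᵥ s) * stdGaussDensity n s) := tIteX.1
  have Iabs : Integrable (fun s : Fin n → ℝ => |u ⬝ᵥ s| * stdGaussDensity n s) := tAbs.1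
  have Irho : Integrable (fun s : Fin n → ℝ => stdGaussDensity n s) := by
    have := tOne.1; simpa using this
  have hmd := measurable_dot u
  have hmρ := measurable_stdGaussDensity n
  have Ih1 : Integrable (fun s : Fin n → ℝ => h s * stdGaussDensity n s) := by
    apply Irho.mono ((hmeas.mul hmρ).aestronglyMeasurable)
    filter_upwards with s
    have hb := hbdd s
    have hρ := stdGaussDensity_nonneg s
    simp only [Real.norm_eq_abs, abs_mul, Pi.mul_apply]
    rw [abs_of_nonneg hb.1, abs_of_nonneg hρ]
    nlinarith [hb.2]
  have Ih2 : Integrable (fun s : Fin n → ℝ => h s * (u ⬝ᵥ s) * stdGaussDensity n s) := by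
    apply Iabs.mono (((hmeas.mul hmd).mul hmρ).aestronglyMeasurable)
    filter_upwards with s
    have hb := hbdd s
    have hρ := stdGaussDensity_nonneg s
    simp only [Real.norm_eq_abs, abs_mul, Pi.mul_apply]
    rw [abs_of_nonneg hb.1, abs_of_nonneg hρ, abs_abs]
    nlinarith [mul_nonneg (mul_nonneg (sub_nonneg.2 hb.2) (abs_nonneg (u ⬝ᵥ s))) hρ]
  have key : 0 ≤ ∫ s, ((if -a ≤ u ⬝ᵥ s then (1:ℝ) else 0) - h s) * (u ⬝ᵥ s - (-a)) *
      stdGaussDensity n s := by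
    refine integral_nonneg fun s => ?_
    show (0:ℝ) ≤ ((if -a ≤ u ⬝ᵥ s then (1:ℝ) else 0) - h s) * (u ⬝ᵥ s - (-a)) *
      stdGaussDensity n s
    have hb := hbdd s
    have hρ := stdGaussDensity_nonneg s
    by_cases hle : -a ≤ u ⬝ᵥ s
    · rw [if_pos hle]
      exact mul_nonneg (mul_nonneg (by linarith [hb.2]) (by linarith)) hρ
    · rw [if_neg hle]
      have he : ((0:ℝ) - h s) * (u ⬝ᵥ s - (-a)) = h s * (-a - u ⬝ᵥ s) := by ring
      rw [he]
      exact mul_nonneg (mul_nonneg hb.1 (by linarith)) hρ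
  have expand : ∀ s : Fin n → ℝ, ((if -a ≤ u ⬝ᵥ s then (1:ℝ) else 0) - h s) * (u ⬝ᵥ s - (-a)) *
        stdGaussDensity n s
      = ((if -a ≤ u ⬝ᵥ s then (1:ℝ) else 0) * (u ⬝ᵥ s) * stdGaussDensity n s
          - h s * (u ⬝ᵥ s) * stdGaussDensity n s
          - (-a) * ((if -a ≤ u ⬝ᵥ s then (1:ℝ) else 0) * stdGaussDensity n s))
        + (-a) * (h s * stdGaussDensity n s) := fun s => by ring
  rw [integral_congr_ae (Filter.Eventually.of_forall expand)] at key
  have hA : Integrable (fun s : Fin n → ℝ =>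
      (if -a ≤ u ⬝ᵥ s then (1:ℝ) else 0) * (u ⬝ᵥ s) * stdGaussDensity n s
        - h s * (u ⬝ᵥ s) * stdGaussDensity n s
        - (-a) * ((if -a ≤ u ⬝ᵥ s then (1:ℝ) else 0) * stdGaussDensity n s)) :=
    (IH2.sub Ih2).sub (IH1.const_mul (-a))
  have hD : Integrable (fun s : Fin n → ℝ => (-a) * (h s * stdGaussDensity n s)) :=
    Ih1.const_mul (-a)
  have hAB : Integrable (fun s : Fin n → ℝ =>
      (if -a ≤ u ⬝ᵥ s then (1:ℝ) else 0) * (u ⬝ᵥ s) * stdGaussDensity n s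
        - h s * (u ⬝ᵥ s) * stdGaussDensity n s) := IH2.sub Ih2
  have hC : Integrable (fun s : Fin n → ℝ =>
      (-a) * ((if -a ≤ u ⬝ᵥ s then (1:ℝ) else 0) * stdGaussDensity n s)) :=
    IH1.const_mul (-a)
  rw [integral_add hA hD, integral_sub hAB hC, integral_sub IH2 Ih2,
    integral_const_mul, integral_const_mul, part2, hconstraint, part3] at key
  linarith
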